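/- Let M be a von Neumann algebra with faithful state φ and operator norm ‖·‖_∞. Suppose (xₙ)ₙ and (bₙ)ₙ are sequences in the unit ball of M, λ > 0, and ‖xₙφ − λφxₙ‖ → 0 along an ultrafilter ω, while ‖bₙ‖_φ, ‖bₙ*‖_φ → 0 along ω (here ‖a‖_φ = φ(a*a)^{1/2} and xφ = φ(·x), φx = φ(x·)). Then (‖xₙbₙ‖_φ^#)² ≤ ‖bₙ‖_φ + λ⁻¹‖xₙφ − λφxₙ‖ + λ⁻¹‖bₙ*‖_φ for each n, where ‖a‖_φ^# = φ(a*a + aa*)^{1/2}; consequently ‖xₙbₙ‖_φ^# → 0 along ω. -/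

import Mathlib

open Filter

variable {A : Type*}

/-- `‖a‖_φ = φ(a* a)^{1/2}`. -/
noncomputable def phiNorm [NormedRing A] [StarRing A] [NormedAlgebra ℂ A]
    (φ : A →L[ℂ] ℂ) (a : A) : ℝ :=
  Real.sqrt (φ (star a * a)).re

/-- `‖a‖_φ^# = φ(a* a + a a*)^{1/2}`. -/
noncomputable def phiSharpNorm [NormedRing A] [StarRing A] [NormedAlgebra ℂ A]
    (φ : A →L[ℂ] ℂ) (a : A) : ℝ :=
  Real.sqrt (φ (star a * a + a * star a)).re

/-- The functional `xφ = φ(· x)`. -/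
noncomputable def rightFunc [NormedRing A] [StarRing A] [NormedAlgebra ℂ A]
    (φ : A →L[ℂ] ℂ) (x : A) : A →L[ℂ] ℂ :=
  φ.comp ((ContinuousLinearMap.mul ℂ A).flip x)

/-- The functional `φx = φ(x ·)`. -/
noncomputable def leftFunc [NormedRing A] [StarRing A] [NormedAlgebra ℂ A]
    (φ : A →L[ℂ] ℂ) (x : A) : A →L[ℂ] ℂ :=
  φ.comp (ContinuousLinearMap.mul ℂ A x)

section Aux
variable [NormedRing A] [StarRing A] [CStarRing A] [NormedAlgebra ℂ A] [StarModule ℂ A]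
  [CompleteSpace A]

/-- Conjugate symmetry of the sesquilinear form `(a, c) ↦ φ(a* c)`. -/
lemma auxPhi_conj_symm (φ : A →L[ℂ] ℂ)
    (hφpos : ∀ a : A, 0 ≤ (φ (star a * a)).re ∧ (φ (star a * a)).im = 0)
    (a c : A) : φ (star c * a) = starRingEnd ℂ (φ (star a * c)) := by
  have him : ∀ z : A, (φ (star z * z)).im = 0 := fun z => (hφpos z).2
  have e1 : star (a + c) * (a + c)
      = star a * a + star a * c + star c * a + star c * c := by
    rw [star_add]; noncomm_ring
  have e2 : star (a + Complex.I • c) * (a + Complex.I • c)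
      = star a * a + Complex.I • (star a * c) + (-Complex.I) • (star c * a)
        + star c * c := by
    have hs : star (Complex.I • c) = (-Complex.I) • star c := by
      simp [star_smul, Complex.conj_I]
    rw [star_add, hs, add_mul, mul_add, mul_add, mul_smul_comm, smul_mul_assoc,
      smul_mul_assoc, mul_smul_comm, smul_smul]
    norm_num [Complex.I_mul_I]
    abel
  have h1 := him (a + c)
  have h2 := him (a + Complex.I • c)
  rw [e1] at h1
  rw [e2] at h2
  simp only [map_add, map_smul, smul_eq_mul, Complex.add_im, Complex.mul_im,
    Complex.I_re, Complex.I_im, Complex.neg_im, Complex.neg_re, him a, him c] at h1 h2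
  set u := φ (star a * c)
  set v := φ (star c * a)
  apply Complex.ext <;>
    simp only [Complex.conj_re, Complex.conj_im] <;> linarith

set_option linter.unusedSectionVars false

lemma auxPhi_re_sq (φ : A →L[ℂ] ℂ)
    (hφpos : ∀ a : A, 0 ≤ (φ (star a * a)).re ∧ (φ (star a * a)).im = 0)
    (a c : A) :
    (φ (star a * c)).re ^ 2 ≤ (φ (star a * a)).re * (φ (star c * c)).re := by
  have hconj := auxPhi_conj_symm φ hφpos a c
  have key : ∀ t : ℝ, 0 ≤ (φ (star a * a)).re * (t * t)
      + (2 * (φ (star a * c)).re) * t + (φ (star c * c)).re := by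
    intro t
    have h0 := (hφpos (((t : ℝ) : ℂ) • a + c)).1
    have e : star (((t : ℝ) : ℂ) • a + c) * (((t : ℝ) : ℂ) • a + c)
        = (((t * t : ℝ) : ℂ)) • (star a * a) + ((t : ℝ) : ℂ) • (star a * c)
          + ((t : ℝ) : ℂ) • (star c * a) + star c * c := by
      have hs : star ((((t : ℝ)) : ℂ) • a) = (((t : ℝ)) : ℂ) • star a := by
        simp [star_smul, Complex.conj_ofReal]
      rw [star_add, hs, add_mul, mul_add, mul_add, mul_smul_comm, smul_mul_assoc,
        smul_mul_assoc, mul_smul_comm, smul_smul]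
      push_cast
      abel
    rw [e] at h0
    simp only [map_add, map_smul, smul_eq_mul, Complex.add_re, Complex.re_ofReal_mul,
      hconj, Complex.conj_re] at h0
    nlinarith [h0]
  have hd := discrim_le_zero key
  rw [discrim] at hd
  nlinarith [hd]

lemma auxPhi_cs (φ : A →L[ℂ] ℂ)
    (hφpos : ∀ a : A, 0 ≤ (φ (star a * a)).re ∧ (φ (star a * a)).im = 0)
    (a c : A) :
    ‖φ (star a * c)‖ ^ 2 ≤ (φ (star a * a)).re * (φ (star c * c)).re := by
  by_cases hu : φ (star a * c) = 0
  · simpa [hu] using mul_nonneg (hφpos a).1 (hφpos c).1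
  · set u := φ (star a * c) with hu_def
    set γ : ℂ := starRingEnd ℂ u / (‖u‖ : ℂ) with hγ_def
    have hnu : (‖u‖ : ℂ) ≠ 0 := by
      simpa using norm_ne_zero_iff.mpr hu
    have e1 : φ (star a * (γ • c)) = (‖u‖ : ℂ) := by
      rw [mul_smul_comm, map_smul, smul_eq_mul, hγ_def]
      rw [div_mul_eq_mul_div, ← hu_def, RCLike.conj_mul]
      rw [sq]
      exact mul_div_cancel_right₀ _ hnu
    have e2 : star (γ • c) * (γ • c) = star c * c := by
      rw [star_smul, smul_mul_assoc, mul_smul_comm, smul_smul]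
      have h0 : ‖u‖ ≠ 0 := norm_ne_zero_iff.mpr hu
      have hγ1 : ‖γ‖ = 1 := by
        simp only [hγ_def, norm_div, RCLike.norm_conj, Complex.norm_real,
          Real.norm_eq_abs, abs_norm]
        exact div_self h0
      have : star γ * γ = 1 := by
        rw [Complex.star_def, RCLike.conj_mul, hγ1]
        norm_num
      rw [this, one_smul]
    have h := auxPhi_re_sq φ hφpos a (γ • c)
    rw [e1, e2] at h
    simpa using h

/-- If `‖a‖ ≤ 1` then `1 - a* a` is of the form `c* c`. -/
lemma auxPhi_sqrt (a : A) (ha : ‖a‖ ≤ 1) : ∃ c : A, star c * c = 1 - star a * a := by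
  letI : CStarAlgebra A := { }
  letI : PartialOrder A := CStarAlgebra.spectralOrder A
  letI : StarOrderedRing A := CStarAlgebra.spectralOrderedRing A
  have h1 : (0 : A) ≤ star a * a := star_mul_self_nonneg a
  have h2 : star a * a ≤ 1 := by
    rw [← CStarAlgebra.norm_le_one_iff_of_nonneg _ h1, CStarRing.norm_star_mul_self]
    nlinarith [norm_nonneg a]
  have h3 : (0 : A) ≤ 1 - star a * a := sub_nonneg.mpr h2
  refine ⟨CFC.sqrt (1 - star a * a), ?_⟩
  rw [(IsSelfAdjoint.of_nonneg (CFC.sqrt_nonneg _)).star_eq, CFC.sqrt_mul_sqrt_self _ h3]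

/-- `φ(a* a).re ≤ 1` for `a` in the unit ball. -/
lemma auxPhi_le_one (φ : A →L[ℂ] ℂ) (hφone : φ 1 = 1)
    (hφpos : ∀ a : A, 0 ≤ (φ (star a * a)).re ∧ (φ (star a * a)).im = 0)
    (a : A) (ha : ‖a‖ ≤ 1) : (φ (star a * a)).re ≤ 1 := by
  obtain ⟨c, hc⟩ := auxPhi_sqrt a ha
  have h := (hφpos c).1
  rw [hc, map_sub, hφone, Complex.sub_re, Complex.one_re] at h
  linarith

end Aux

set_option maxHeartbeats 1000000 in
/-- If `(xₙ)`, `(bₙ)` are sequences in the unit ball of a von Neumann algebra with faithful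
state `φ`, `λ > 0`, `‖xₙφ − λφxₙ‖ → 0` along `ω` and `‖bₙ‖_φ, ‖bₙ*‖_φ → 0` along `ω`, then
`(‖xₙbₙ‖_φ^#)² ≤ ‖bₙ‖_φ + λ⁻¹‖xₙφ − λφxₙ‖ + λ⁻¹‖bₙ*‖_φ` for each `n`; consequently
`‖xₙbₙ‖_φ^# → 0` along `ω`. -/
theorem phi_sharp_norm_estimate
    [NormedRing A] [StarRing A] [CStarRing A] [NormedAlgebra ℂ A] [StarModule ℂ A]
    [CompleteSpace A]
    (ω : Ultrafilter ℕ)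
    (φ : A →L[ℂ] ℂ) (hφone : φ 1 = 1)
    (hφpos : ∀ a : A, 0 ≤ (φ (star a * a)).re ∧ (φ (star a * a)).im = 0)
    (hφfaithful : ∀ a : A, φ (star a * a) = 0 → a = 0)
    (lam : ℝ) (hlam : 0 < lam)
    (x b : ℕ → A) (hx : ∀ n, ‖x n‖ ≤ 1) (hb : ∀ n, ‖b n‖ ≤ 1)
    (hxcomm : Tendsto (fun n => ‖rightFunc φ (x n) - (lam : ℂ) • leftFunc φ (x n)‖)
      (↑ω : Filter ℕ) (nhds 0))
    (hbphi : Tendsto (fun n => phiNorm φ (b n)) (↑ω : Filter ℕ) (nhds 0))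
    (hbstarphi : Tendsto (fun n => phiNorm φ (star (b n))) (↑ω : Filter ℕ) (nhds 0)) :
    (∀ n, (phiSharpNorm φ (x n * b n)) ^ 2 ≤
        phiNorm φ (b n) + lam⁻¹ * ‖rightFunc φ (x n) - (lam : ℂ) • leftFunc φ (x n)‖ +
          lam⁻¹ * phiNorm φ (star (b n))) ∧
      Tendsto (fun n => phiSharpNorm φ (x n * b n)) (↑ω : Filter ℕ) (nhds 0) := by
  have key : ∀ n, (phiSharpNorm φ (x n * b n)) ^ 2 ≤
      phiNorm φ (b n) + lam⁻¹ * ‖rightFunc φ (x n) - (lam : ℂ) • leftFunc φ (x n)‖ +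
        lam⁻¹ * phiNorm φ (star (b n)) := by
    intro n
    set X := x n with hX
    set B := b n with hB
    set D := rightFunc φ X - (lam : ℂ) • leftFunc φ X with hD
    have hr1 : 0 ≤ (φ (star (X * B) * (X * B))).re := (hφpos _).1
    have hr2 : 0 ≤ (φ ((X * B) * star (X * B))).re := by
      have := (hφpos (star (X * B))).1
      rwa [star_star] at this
    have hsq : phiSharpNorm φ (X * B) ^ 2
        = (φ (star (X * B) * (X * B))).re + (φ ((X * B) * star (X * B))).re := by
      rw [phiSharpNorm, map_add, Complex.add_re, Real.sq_sqrt (by linarith)]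
    -- Bound 1 : first term ≤ phiNorm φ B
    have bound1 : (φ (star (X * B) * (X * B))).re ≤ phiNorm φ B := by
      obtain ⟨c, hc⟩ := auxPhi_sqrt X (hx n)
      have e : star (c * B) * (c * B) = star B * B - star (X * B) * (X * B) := by
        calc star (c * B) * (c * B) = star B * (star c * c) * B := by
              rw [star_mul]; noncomm_ring
        _ = star B * (1 - star X * X) * B := by rw [hc]
        _ = star B * B - star (X * B) * (X * B) := by rw [star_mul]; noncomm_ring
      have h1 := (hφpos (c * B)).1
      rw [e, map_sub, Complex.sub_re] at h1
      have hle1 : (φ (star B * B)).re ≤ 1 := auxPhi_le_one φ hφone hφpos B (hb n)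
      have hnn := (hφpos B).1
      have hs1 : Real.sqrt (φ (star B * B)).re ≤ 1 := Real.sqrt_le_one.mpr hle1
      have hs2 := Real.sq_sqrt hnn
      have hs3 := Real.sqrt_nonneg (φ (star B * B)).re
      rw [phiNorm]
      nlinarith
    -- Bound 2 : second term
    have bound2 : (φ ((X * B) * star (X * B))).re ≤
        lam⁻¹ * ‖D‖ + lam⁻¹ * phiNorm φ (star B) := by
      set y := B * star B * star X with hy
      have hyX : (X * B) * star (X * B) = X * y := by
        rw [star_mul, hy]; noncomm_ring
      have hDy : D y = φ (y * X) - (lam : ℂ) * φ (X * y) := by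
        simp [hD, rightFunc, leftFunc, smul_eq_mul]
      have hre : lam * (φ (X * y)).re = (φ (y * X)).re - (D y).re := by
        have := congrArg Complex.re hDy
        rw [Complex.sub_re, Complex.re_ofReal_mul] at this
        linarith
      -- ‖y‖ ≤ 1
      have hyn : ‖y‖ ≤ 1 := by
        calc ‖B * star B * star X‖ ≤ ‖B * star B‖ * ‖star X‖ := norm_mul_le _ _
        _ ≤ (‖B‖ * ‖star B‖) * ‖star X‖ := by
            gcongr; exact norm_mul_le _ _
        _ ≤ 1 := by
            rw [norm_star, norm_star]
            have h1 : ‖B‖ ≤ 1 := by rw [hB]; exact hb n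
            have h2 : ‖X‖ ≤ 1 := by rw [hX]; exact hx n
            exact mul_le_one₀ (mul_le_one₀ h1 (norm_nonneg B) h1) (norm_nonneg X) h2
      have hDyn : ‖D y‖ ≤ ‖D‖ := by
        calc ‖D y‖ ≤ ‖D‖ * ‖y‖ := D.le_opNorm y
        _ ≤ ‖D‖ * 1 := by gcongr
        _ = ‖D‖ := mul_one _
      have hDre : -(D y).re ≤ ‖D‖ := by
        have := Complex.abs_re_le_norm (D y)
        have := abs_le.mp this
        linarith
      -- Cauchy-Schwarz for φ (y * X)
      have hyX2 : y * X = star (star B) * (star B * star X * X) := by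
        rw [star_star, hy]; noncomm_ring
      have hcn : ‖star B * star X * X‖ ≤ 1 := by
        calc ‖star B * star X * X‖ ≤ ‖star B * star X‖ * ‖X‖ := norm_mul_le _ _
        _ ≤ (‖star B‖ * ‖star X‖) * ‖X‖ := by gcongr; exact norm_mul_le _ _
        _ ≤ 1 := by
            rw [norm_star, norm_star]
            have h1 : ‖B‖ ≤ 1 := by rw [hB]; exact hb n
            have h2 : ‖X‖ ≤ 1 := by rw [hX]; exact hx n
            exact mul_le_one₀ (mul_le_one₀ h1 (norm_nonneg X) h2) (norm_nonneg X) h2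
      have hcs := auxPhi_cs φ hφpos (star B) (star B * star X * X)
      have hfac2 : (φ (star (star B * star X * X) * (star B * star X * X))).re ≤ 1 :=
        auxPhi_le_one φ hφone hφpos _ hcn
      have hfac1 : (φ (star (star B) * star B)).re = phiNorm φ (star B) ^ 2 := by
        rw [phiNorm, Real.sq_sqrt (hφpos (star B)).1]
      have hfac1nn : 0 ≤ (φ (star (star B) * star B)).re := (hφpos (star B)).1
      have hcs2 : ‖φ (y * X)‖ ^ 2 ≤ phiNorm φ (star B) ^ 2 := by
        rw [hyX2]
        calc ‖φ (star (star B) * (star B * star X * X))‖ ^ 2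
            ≤ (φ (star (star B) * star B)).re
              * (φ (star (star B * star X * X) * (star B * star X * X))).re := hcs
        _ ≤ (φ (star (star B) * star B)).re * 1 := by gcongr
        _ = phiNorm φ (star B) ^ 2 := by rw [mul_one, hfac1]
      have hcs3 : ‖φ (y * X)‖ ≤ phiNorm φ (star B) := by
        have h1 := norm_nonneg (φ (y * X))
        have h2 : 0 ≤ phiNorm φ (star B) := Real.sqrt_nonneg _
        nlinarith
      have hreyX : (φ (y * X)).re ≤ phiNorm φ (star B) := by
        have := Complex.abs_re_le_norm (φ (y * X))
        have := abs_le.mp this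
        linarith
      rw [hyX]
      have hfinal : lam * (φ (X * y)).re ≤ ‖D‖ + phiNorm φ (star B) := by
        rw [hre]; linarith
      have h5 : (φ (X * y)).re ≤ lam⁻¹ * (‖D‖ + phiNorm φ (star B)) := by
        have hlam' : 0 < lam⁻¹ := inv_pos.mpr hlam
        calc (φ (X * y)).re = lam⁻¹ * (lam * (φ (X * y)).re) := by
              field_simp
        _ ≤ lam⁻¹ * (‖D‖ + phiNorm φ (star B)) := by
              exact mul_le_mul_of_nonneg_left hfinal hlam'.le
      rw [mul_add] at h5
      linarith
    rw [hsq]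
    linarith
  refine ⟨key, ?_⟩
  have hRHS : Tendsto (fun n => phiNorm φ (b n)
      + lam⁻¹ * ‖rightFunc φ (x n) - (lam : ℂ) • leftFunc φ (x n)‖
      + lam⁻¹ * phiNorm φ (star (b n))) (↑ω : Filter ℕ) (nhds 0) := by
    have h := (hbphi.add (hxcomm.const_mul lam⁻¹)).add (hbstarphi.const_mul lam⁻¹)
    simpa using h
  have hsq0 : Tendsto (fun n => phiSharpNorm φ (x n * b n) ^ 2) (↑ω : Filter ℕ) (nhds 0) :=
    squeeze_zero (fun n => sq_nonneg _) key hRHS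
  have hcomp : Tendsto (fun n => Real.sqrt (phiSharpNorm φ (x n * b n) ^ 2))
      (↑ω : Filter ℕ) (nhds 0) :=
    (Real.continuous_sqrt.tendsto' 0 0 Real.sqrt_zero).comp hsq0
  exact hcomp.congr fun n => Real.sqrt_sq (Real.sqrt_nonneg _)
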